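/- Let 𝒯 be any finite set of positive-definite binary integer-matrix forms, none of which is equivalent to ⟨1,1⟩ = x² + y². Then there exists a positive-definite integer-matrix lattice L that represents every form in 𝒯 but does not represent ⟨1,1⟩. -/

import Mathlib

open Matrix

/-- `G` (Gram matrix of a `ℤ`-lattice) represents the quadratic form with Gram matrix `q`:
there is a `ℤ`-linear injection preserving the bilinear forms. -/
def Represents {ι κ : Type*} [Fintype ι] [Fintype κ]
    (G : Matrix ι ι ℤ) (q : Matrix κ κ ℤ) : Prop :=
  ∃ S : Matrix ι κ ℤ, Function.Injective S.mulVec ∧ Sᵀ * G * S = q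

/-- A symmetric positive-definite integer Gram matrix. -/
def IsPosDefForm {ι : Type*} [Fintype ι] (G : Matrix ι ι ℤ) : Prop :=
  G.IsSymm ∧ ∀ x : ι → ℤ, x ≠ 0 → 0 < x ⬝ᵥ G.mulVec x

/-- The binary form `[a,b,c] = a x² + 2 b x y + c y²` with Gram matrix `((a,b),(b,c))`. -/
def bin (a b c : ℤ) : Matrix (Fin 2) (Fin 2) ℤ := !![a, b; b, c]


/-- Two binary forms are equivalent if their Gram matrices are `GL₂(ℤ)`-equivalent. -/
def EquivForm (q q' : Matrix (Fin 2) (Fin 2) ℤ) : Prop :=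
  ∃ U : Matrix (Fin 2) (Fin 2) ℤ, IsUnit U.det ∧ Uᵀ * q * U = q'


lemma mulVec_inj_of_isUnit_det {n : Type*} [Fintype n] [DecidableEq n]
    {A : Matrix n n ℤ} (h : IsUnit A.det) : Function.Injective A.mulVec := by
  intro x y hxy
  have hA := A.invertibleOfIsUnitDet h
  have := congrArg (A⁻¹.mulVec) hxy
  simpa [Matrix.mulVec_mulVec, Matrix.nonsing_inv_mul A h] using this

lemma congr_entry {ι κ : Type*} [Fintype ι] [Fintype κ] (S : Matrix ι κ ℤ)
    (L : Matrix ι ι ℤ) (a b : κ) :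
    (Sᵀ * L * S) a b = (fun p => S p a) ⬝ᵥ L.mulVec (fun p => S p b) := by
  simp only [Matrix.mul_apply, Matrix.mulVec, dotProduct, Matrix.transpose_apply]
  simp only [Finset.sum_mul, Finset.mul_sum]
  rw [Finset.sum_comm]
  exact Finset.sum_congr rfl fun i _ => Finset.sum_congr rfl fun j _ => by ring

lemma quad_congr {n : Type*} [Fintype n] (A q : Matrix n n ℤ) (x : n → ℤ) :
    x ⬝ᵥ (Aᵀ * q * A).mulVec x = (A.mulVec x) ⬝ᵥ q.mulVec (A.mulVec x) := by
  rw [Matrix.mul_assoc, ← Matrix.mulVec_mulVec, ← Matrix.mulVec_mulVec,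
    Matrix.dotProduct_mulVec, Matrix.vecMul_transpose]

lemma represents_submatrix {ι κ : Type*} [Fintype ι] [Fintype κ] [DecidableEq ι] [DecidableEq κ]
    (L : Matrix ι ι ℤ) (f : κ → ι) (hf : Function.Injective f) :
    Represents L (L.submatrix f f) := by
  classical
  refine ⟨fun p c => if p = f c then 1 else 0, ?_, ?_⟩
  · intro v w hvw
    funext c
    have := congrFun hvw (f c)
    simpa [Matrix.mulVec, dotProduct, hf.eq_iff] using this
  · ext a b
    refine (congr_entry _ L a b).trans ?_
    simp [Matrix.mulVec, dotProduct, hf.eq_iff]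

lemma represents_trans {ι κ μ : Type*} [Fintype ι] [Fintype κ] [Fintype μ]
    {L : Matrix ι ι ℤ} {M : Matrix κ κ ℤ} {q : Matrix μ μ ℤ}
    (h1 : Represents L M) (h2 : Represents M q) : Represents L q := by
  obtain ⟨S1, hi1, he1⟩ := h1
  obtain ⟨S2, hi2, he2⟩ := h2
  refine ⟨S1 * S2, ?_, ?_⟩
  · intro x y hxy
    apply hi2; apply hi1
    simpa [← Matrix.mulVec_mulVec] using hxy
  · rw [Matrix.transpose_mul, ← he2, ← he1]
    simp only [Matrix.mul_assoc]

lemma quad_expand (q : Matrix (Fin 2) (Fin 2) ℤ) (x : Fin 2 → ℤ) :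
    x ⬝ᵥ q.mulVec x = q 0 0 * x 0 * x 0 + q 0 1 * x 0 * x 1
      + q 1 0 * x 1 * x 0 + q 1 1 * x 1 * x 1 := by
  simp [dotProduct, Matrix.mulVec, Fin.sum_univ_two]
  ring

lemma reduce (q : Matrix (Fin 2) (Fin 2) ℤ) (hq : IsPosDefForm q)
    (x : Fin 2 → ℤ) (hx : x ⬝ᵥ q.mulVec x = 1) :
    ∃ c : ℤ, 0 < c ∧
      (∃ A : Matrix (Fin 2) (Fin 2) ℤ, IsUnit A.det ∧ Aᵀ * q * A = bin 1 0 c) ∧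
      (∃ V : Matrix (Fin 2) (Fin 2) ℤ, IsUnit V.det ∧ Vᵀ * (bin 1 0 c) * V = q) := by
  have hquad := quad_expand q x
  rw [hx] at hquad
  obtain ⟨y0, h0⟩ : (↑(Int.gcd (x 0) (x 1)) : ℤ) ∣ x 0 := Int.gcd_dvd_left _ _
  obtain ⟨y1, h1⟩ : (↑(Int.gcd (x 0) (x 1)) : ℤ) ∣ x 1 := Int.gcd_dvd_right _ _
  set g : ℤ := (↑(Int.gcd (x 0) (x 1)) : ℤ) with hgdef
  have hgdvd : g * g ∣ 1 := by
    refine ⟨q 0 0 * y0 * y0 + q 0 1 * y0 * y1 + q 1 0 * y1 * y0 + q 1 1 * y1 * y1, ?_⟩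
    rw [hquad, h0, h1]; ring
  have hgnonneg : 0 ≤ g := Int.natCast_nonneg _
  have hgsq : g * g = 1 := by
    rcases Int.isUnit_iff.mp (isUnit_of_dvd_one hgdvd) with h | h
    · exact h
    · nlinarith [mul_self_nonneg g]
  have hg1 : g = 1 := by nlinarith
  rw [hgdef] at hg1
  have hcop : IsCoprime (x 0) (x 1) := by
    rw [Int.isCoprime_iff_gcd_eq_one]
    exact_mod_cast hg1
  obtain ⟨u, v, huv⟩ := hcop
  set U : Matrix (Fin 2) (Fin 2) ℤ := !![x 0, -v; x 1, u] with hU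
  have hdetU : U.det = 1 := by
    rw [hU, Matrix.det_fin_two_of]; linarith [huv]
  set M : Matrix (Fin 2) (Fin 2) ℤ := Uᵀ * q * U with hM
  have hqsymm : qᵀ = q := hq.1
  have hMsymm : Mᵀ = M := by
    rw [hM, Matrix.transpose_mul, Matrix.transpose_mul, Matrix.transpose_transpose, hqsymm,
      Matrix.mul_assoc]
  have hUT : Uᵀ = !![x 0, x 1; -v, u] := by
    rw [hU]; ext i j; fin_cases i <;> fin_cases j <;> rfl
  have hM00 : M 0 0 = 1 := by
    have hqe : q = !![q 0 0, q 0 1; q 1 0, q 1 1] := by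
      ext i j; fin_cases i <;> fin_cases j <;> rfl
    rw [hM, hUT, hU]
    conv_lhs => rw [hqe]
    rw [Matrix.mul_fin_two, Matrix.mul_fin_two]
    simp only [Matrix.cons_val', Matrix.cons_val_zero, Matrix.empty_val',
      Matrix.cons_val_fin_one, Matrix.cons_val_one, Matrix.head_cons, Matrix.head_fin_const,
      Matrix.of_apply]
    linear_combination -hquad
  set β : ℤ := M 0 1 with hβ
  have hM10 : M 1 0 = β := by
    conv_lhs => rw [← hMsymm]
    rfl
  set W : Matrix (Fin 2) (Fin 2) ℤ := !![1, -β; 0, 1] with hW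
  set A : Matrix (Fin 2) (Fin 2) ℤ := U * W with hA
  have hdetA : A.det = 1 := by
    rw [hA, Matrix.det_mul, hdetU, hW, Matrix.det_fin_two_of]; ring
  have hdetAu : IsUnit A.det := by rw [hdetA]; exact isUnit_one
  set c : ℤ := M 1 1 - β * β with hc
  have hMeq : M = !![1, β; β, M 1 1] := by
    ext i j
    fin_cases i <;> fin_cases j <;> simp [hM00, hM10, hβ]
  have hWT : Wᵀ = !![1, 0; -β, 1] := by
    rw [hW]; ext i j; fin_cases i <;> fin_cases j <;> rfl
  have hbinc : bin 1 0 c = !![(1:ℤ), 0; 0, M 1 1 - β * β] := by rw [hc]; rfl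
  have hAqA : Aᵀ * q * A = bin 1 0 c := by
    have hstep : Aᵀ * q * A = Wᵀ * M * W := by
      rw [hA, hM, Matrix.transpose_mul]
      simp only [Matrix.mul_assoc]
    rw [hstep, hWT, hW, hbinc]
    conv_lhs => rw [hMeq]
    rw [Matrix.mul_fin_two, Matrix.mul_fin_two]
    ext i j
    fin_cases i <;> fin_cases j <;> simp <;> ring
  -- positivity of c
  have hmv : Function.Injective A.mulVec := mulVec_inj_of_isUnit_det hdetAu
  have hcpos : 0 < c := by
    have hy : A.mulVec ![0, 1] ≠ 0 := by
      intro h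
      have h2 : A.mulVec ![0, 1] = A.mulVec 0 := by rw [Matrix.mulVec_zero, h]
      have := congrFun (hmv h2) 1
      simp at this
    have hpos := hq.2 _ hy
    have hqc := quad_congr A q ![0, 1]
    rw [hAqA] at hqc
    have : (![0, 1] : Fin 2 → ℤ) ⬝ᵥ (bin 1 0 c).mulVec ![0, 1] = c := by
      rw [quad_expand]
      simp [bin]
    rw [this] at hqc
    rw [hqc]
    exact hpos
  refine ⟨c, hcpos, ⟨A, hdetAu, hAqA⟩, ⟨A⁻¹, ?_, ?_⟩⟩
  · have h2 : A * A⁻¹ = 1 := Matrix.mul_nonsing_inv _ hdetAu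
    have := congrArg Matrix.det h2
    rw [Matrix.det_mul, Matrix.det_one, mul_comm] at this
    exact IsUnit.of_mul_eq_one _ this
  · have h1 : Aᵀ⁻¹ * Aᵀ = 1 := Matrix.nonsing_inv_mul _ (by rwa [Matrix.det_transpose])
    have h2 : A * A⁻¹ = 1 := Matrix.mul_nonsing_inv _ hdetAu
    rw [Matrix.transpose_nonsing_inv, ← hAqA]
    calc Aᵀ⁻¹ * (Aᵀ * q * A) * A⁻¹ = (Aᵀ⁻¹ * Aᵀ) * q * (A * A⁻¹) := by
          simp only [Matrix.mul_assoc]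
      _ = q := by rw [h1, h2, Matrix.one_mul, Matrix.mul_one]

lemma quad_bin (a b : ℤ) (x : Fin 2 → ℤ) :
    x ⬝ᵥ (bin a 0 b).mulVec x = a * x 0 * x 0 + b * x 1 * x 1 := by
  rw [quad_expand]
  simp [bin]

lemma isPosDefForm_bin (a b : ℤ) (ha : 0 < a) (hb : 0 < b) : IsPosDefForm (bin a 0 b) := by
  constructor
  · show (bin a 0 b)ᵀ = bin a 0 b
    ext i j; fin_cases i <;> fin_cases j <;> rfl
  · intro x hx
    rw [quad_bin]
    rcases ne_or_eq (x 0) 0 with h0 | h0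
    · nlinarith [mul_self_pos.mpr h0, mul_self_nonneg (x 1)]
    · have h1 : x 1 ≠ 0 := by
        intro h1; apply hx; funext i; fin_cases i <;> simp [h0, h1]
      nlinarith [mul_self_pos.mpr h1, mul_self_nonneg (x 0)]

lemma quad_blockDiagonal {J : Type*} [Fintype J] [DecidableEq J]
    (D : J → Matrix (Fin 2) (Fin 2) ℤ) (x : Fin 2 × J → ℤ) :
    x ⬝ᵥ (blockDiagonal D).mulVec x
      = ∑ j : J, (fun i => x (i, j)) ⬝ᵥ (D j).mulVec (fun i => x (i, j)) := by
  simp only [dotProduct, Matrix.mulVec, Matrix.blockDiagonal_apply, ite_mul, zero_mul,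
    Fintype.sum_prod_type, Finset.sum_ite_eq, Finset.mem_univ, if_true, Finset.mul_sum]
  rw [Finset.sum_comm]

lemma blockDiagonal_submatrix_block {J : Type*} [Fintype J] [DecidableEq J]
    (D : J → Matrix (Fin 2) (Fin 2) ℤ) (k : J) :
    (blockDiagonal D).submatrix (fun i => (i, k)) (fun i => (i, k)) = D k := by
  ext i j; simp [Matrix.blockDiagonal_apply]

lemma blockDiagonal_submatrix_two {J : Type*} [Fintype J] [DecidableEq J]
    (D : J → Matrix (Fin 2) (Fin 2) ℤ) (k k' : J) (h : k ≠ k') :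
    (blockDiagonal D).submatrix (Sum.elim (fun i => (i, k)) (fun i => (i, k')))
      (Sum.elim (fun i => (i, k)) (fun i => (i, k')))
      = Matrix.fromBlocks (D k) 0 0 (D k') := by
  ext a b
  cases a <;> cases b <;> simp [Matrix.blockDiagonal_apply, h, h.symm]

lemma sub_bin (c : ℤ) :
    (Matrix.fromBlocks (bin 1 0 3) 0 0 (bin c 0 c)).submatrix
      (![Sum.inl 0, Sum.inr 0] : Fin 2 → Fin 2 ⊕ Fin 2) ![Sum.inl 0, Sum.inr 0] = bin 1 0 c := by
  ext i j; fin_cases i <;> fin_cases j <;> simp [bin]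

lemma isPosDefForm_blockDiagonal {J : Type*} [Fintype J] [DecidableEq J]
    (D : J → Matrix (Fin 2) (Fin 2) ℤ)
    (h : ∀ j, IsPosDefForm (D j)) : IsPosDefForm (blockDiagonal D) := by
  constructor
  · show (blockDiagonal D)ᵀ = blockDiagonal D
    rw [Matrix.blockDiagonal_transpose]
    exact congrArg _ (funext fun j => (h j).1)
  · intro x hx
    rw [quad_blockDiagonal]
    have hnn : ∀ j, 0 ≤ (fun i => x (i, j)) ⬝ᵥ (D j).mulVec (fun i => x (i, j)) := by
      intro j
      by_cases hz : (fun i => x (i, j)) = 0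
      · rw [hz]; simp
      · exact le_of_lt ((h j).2 _ hz)
    obtain ⟨p, hp⟩ : ∃ p, x p ≠ 0 := by
      by_contra hcon; push_neg at hcon; exact hx (funext hcon)
    refine Finset.sum_pos' (fun j _ => hnn j) ⟨p.2, Finset.mem_univ _, ?_⟩
    apply (h p.2).2
    intro hz
    exact hp (by simpa using congrFun hz p.1)

lemma sum_elim_pair_injective {J : Type*} (k k' : J) (h : k ≠ k') :
    Function.Injective (Sum.elim (fun i : Fin 2 => (i, k)) (fun i : Fin 2 => (i, k'))) := by
  rintro (a | a) (b | b) hab <;> simp_all [Prod.ext_iff]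

lemma isPosDefForm_reindex {ι κ : Type*} [Fintype ι] [Fintype κ] (e : ι ≃ κ)
    {L : Matrix ι ι ℤ} (h : IsPosDefForm L) : IsPosDefForm (L.submatrix e.symm e.symm) := by
  constructor
  · show (L.submatrix e.symm e.symm)ᵀ = _
    ext i j
    simp only [Matrix.transpose_apply, Matrix.submatrix_apply]
    exact congrFun (congrFun h.1 (e.symm i)) (e.symm j)
  · intro x hx
    have hq : x ⬝ᵥ (L.submatrix e.symm e.symm).mulVec x
        = (fun a => x (e a)) ⬝ᵥ L.mulVec (fun a => x (e a)) := by
      simp only [dotProduct, Matrix.mulVec, Matrix.submatrix_apply]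
      refine (Fintype.sum_equiv e _ _ fun a => ?_).symm
      simp only [Equiv.symm_apply_apply]
      exact congrArg (fun s => x (e a) * s)
        (Fintype.sum_equiv e _ _ fun b => by simp only [Equiv.symm_apply_apply])
    rw [hq]
    apply h.2
    intro hz
    apply hx
    funext i
    have := congrFun hz (e.symm i)
    simpa using this

lemma represents_reindex_fwd {ι κ : Type*} [Fintype ι] [Fintype κ] [DecidableEq ι] [DecidableEq κ]
    (e : ι ≃ κ) (L : Matrix ι ι ℤ) :
    Represents (L.submatrix e.symm e.symm) L := by
  have := represents_submatrix (L.submatrix e.symm e.symm) e e.injective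
  have heq : (L.submatrix e.symm e.symm).submatrix e e = L := by
    ext i j; simp
  rwa [heq] at this

lemma represents_reindex_bwd {ι κ : Type*} [Fintype ι] [Fintype κ] [DecidableEq ι] [DecidableEq κ]
    (e : ι ≃ κ) (L : Matrix ι ι ℤ) :
    Represents L (L.submatrix e.symm e.symm) :=
  represents_submatrix L e.symm e.symm.injective

/-- if `𝒯` is a finite set of positive-definite binary forms none of which
is equivalent to `⟨1,1⟩`, then some positive-definite lattice represents all of `𝒯` but
not `⟨1,1⟩`. -/
theorem exists_lattice_truant_one_one (T : Finset (Matrix (Fin 2) (Fin 2) ℤ))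
    (hpd : ∀ q ∈ T, IsPosDefForm q)
    (hne : ∀ q ∈ T, ¬ EquivForm q (bin 1 0 1)) :
    ∃ (n : ℕ) (L : Matrix (Fin n) (Fin n) ℤ), IsPosDefForm L ∧
      (∀ q ∈ T, Represents L q) ∧ ¬ Represents L (bin 1 0 1) := by
  classical
  have key : ∀ t : {q : Matrix (Fin 2) (Fin 2) ℤ // q ∈ T}, ∃ B : Matrix (Fin 2) (Fin 2) ℤ,
      IsPosDefForm B ∧
      (∀ x : Fin 2 → ℤ, x ≠ 0 → 2 ≤ x ⬝ᵥ B.mulVec x) ∧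
      Represents (Matrix.fromBlocks (bin 1 0 3) 0 0 B) (t : Matrix (Fin 2) (Fin 2) ℤ) := by
    rintro ⟨q, hqT⟩
    by_cases hex : ∃ x : Fin 2 → ℤ, x ⬝ᵥ q.mulVec x = 1
    · obtain ⟨x, hx⟩ := hex
      obtain ⟨c, hcpos, ⟨A, hAu, hAe⟩, ⟨V, hVu, hVe⟩⟩ := reduce q (hpd q hqT) x hx
      have hc1 : c ≠ 1 := by
        intro h; subst h; exact hne q hqT ⟨A, hAu, hAe⟩
      have hc2 : 2 ≤ c := by omega
      refine ⟨bin c 0 c, isPosDefForm_bin c c (by omega) (by omega), ?_, ?_⟩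
      · intro y hy0
        rw [quad_bin]
        rcases ne_or_eq (y 0) 0 with h0 | h0
        · nlinarith [mul_self_pos.mpr h0, mul_self_nonneg (y 1)]
        · have h1 : y 1 ≠ 0 := by
            intro h1; apply hy0; funext i; fin_cases i <;> simp [h0, h1]
          nlinarith [mul_self_pos.mpr h1, mul_self_nonneg (y 0)]
      · have hinj : Function.Injective (![Sum.inl 0, Sum.inr 0] : Fin 2 → Fin 2 ⊕ Fin 2) := by
          decide
        have hr1 := represents_submatrix (Matrix.fromBlocks (bin 1 0 3) 0 0 (bin c 0 c)) _ hinj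
        rw [sub_bin] at hr1
        exact represents_trans hr1 ⟨V, mulVec_inj_of_isUnit_det hVu, hVe⟩
    · push_neg at hex
      refine ⟨q, hpd q hqT, ?_, ?_⟩
      · intro y hy0
        have h1 := (hpd q hqT).2 y hy0
        have h2 := hex y
        omega
      · have hr := represents_submatrix (Matrix.fromBlocks (bin 1 0 3) 0 0 q)
          (Sum.inr : Fin 2 → Fin 2 ⊕ Fin 2) Sum.inr_injective
        have hsub : (Matrix.fromBlocks (bin 1 0 3) 0 0 q).submatrix Sum.inr Sum.inr = q := by
          ext i j; simp
        rwa [hsub] at hr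
  choose B hBpd hBmin hBrep using key
  let J := Unit ⊕ {q : Matrix (Fin 2) (Fin 2) ℤ // q ∈ T}
  let D : J → Matrix (Fin 2) (Fin 2) ℤ := Sum.elim (fun _ => bin 1 0 3) B
  let L0 : Matrix (Fin 2 × J) (Fin 2 × J) ℤ := Matrix.blockDiagonal D
  have hDpd : ∀ j, IsPosDefForm (D j) := by
    rintro (j | j)
    · exact isPosDefForm_bin 1 3 one_pos (by norm_num)
    · exact hBpd j
  have hL0pd : IsPosDefForm L0 := isPosDefForm_blockDiagonal D hDpd
  -- L0 represents every q in T
  have hL0rep : ∀ q ∈ T, Represents L0 q := by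
    intro q hqT
    have hkk : (Sum.inl () : J) ≠ Sum.inr ⟨q, hqT⟩ := by simp
    have h2 := represents_submatrix L0 _ (sum_elim_pair_injective _ _ hkk)
    rw [blockDiagonal_submatrix_two D _ _ hkk] at h2
    exact represents_trans h2 (hBrep ⟨q, hqT⟩)
  -- special vector
  let ev : Fin 2 × J → ℤ := fun p => if p = (0, Sum.inl ()) then 1 else 0
  -- every vector of norm 1 is ± ev
  have claim : ∀ w : Fin 2 × J → ℤ, w ⬝ᵥ L0.mulVec w = 1 → w = ev ∨ w = -ev := by
    intro w hw
    rw [quad_blockDiagonal] at hw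
    set f : J → ℤ := fun j => (fun i => w (i, j)) ⬝ᵥ (D j).mulVec (fun i => w (i, j)) with hf
    have hnn : ∀ j, 0 ≤ f j := by
      intro j
      by_cases hz : (fun i => w (i, j)) = 0
      · rw [hf]; simp only; rw [hz]; simp
      · exact le_of_lt ((hDpd j).2 _ hz)
    have hle : ∀ j, f j ≤ 1 := by
      intro j
      rw [← hw]
      exact Finset.single_le_sum (fun j _ => hnn j) (Finset.mem_univ j)
    have hz : ∀ t : {q // q ∈ T}, ∀ i, w (i, Sum.inr t) = 0 := by
      intro t
      have hpart : (fun i => w (i, Sum.inr t)) = 0 := by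
        by_contra hcon
        have h2 := hBmin t _ hcon
        have h4 : (2:ℤ) ≤ f (Sum.inr t) := h2
        have h3 := hle (Sum.inr t)
        omega
      intro i
      exact congrFun hpart i
    have hsum : f (Sum.inl ()) = 1 := by
      rw [← hw]
      symm
      apply Finset.sum_eq_single_of_mem _ (Finset.mem_univ _)
      rintro (j | j) _ hj
      · simp at hj
      · have h0 : (fun i => w (i, Sum.inr j)) = 0 := funext fun i => hz j i
        show (fun i => w (i, Sum.inr j)) ⬝ᵥ (D (Sum.inr j)).mulVec (fun i => w (i, Sum.inr j)) = 0
        rw [h0]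
        simp
    have hval : (fun i => w (i, Sum.inl ())) ⬝ᵥ (bin 1 0 3).mulVec
        (fun i => w (i, Sum.inl ())) = 1 := hsum
    rw [quad_bin] at hval
    have hw1 : w (1, Sum.inl ()) = 0 := by
      by_contra hne1
      have h1 : 0 < w (1, Sum.inl ()) * w (1, Sum.inl ()) := mul_self_pos.mpr hne1
      nlinarith [mul_self_nonneg (w (0, Sum.inl ()))]
    have hw0 : w (0, Sum.inl ()) = 1 ∨ w (0, Sum.inl ()) = -1 := by
      rw [hw1] at hval
      have h2 : w (0, Sum.inl ()) * w (0, Sum.inl ()) = 1 := by linear_combination hval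
      exact Int.isUnit_iff.mp (IsUnit.of_mul_eq_one _ h2)
    rcases hw0 with h | h
    · left
      funext p
      obtain ⟨i, j⟩ := p
      rcases j with j | t
      · fin_cases i <;> simp [ev, h, hw1]
      · simp [ev, hz t i]
    · right
      funext p
      obtain ⟨i, j⟩ := p
      rcases j with j | t
      · fin_cases i <;> simp [ev, h, hw1]
      · simp [ev, hz t i]
  -- L0 does not represent bin 1 0 1
  have hnot : ¬ Represents L0 (bin 1 0 1) := by
    rintro ⟨S, hSinj, hSe⟩
    have h00 : (fun p => S p 0) ⬝ᵥ L0.mulVec (fun p => S p 0) = 1 := by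
      rw [← congr_entry, hSe]; rfl
    have h11 : (fun p => S p 1) ⬝ᵥ L0.mulVec (fun p => S p 1) = 1 := by
      rw [← congr_entry, hSe]; rfl
    have h01 : (fun p => S p 0) ⬝ᵥ L0.mulVec (fun p => S p 1) = 0 := by
      rw [← congr_entry, hSe]; rfl
    have hu := claim _ h00
    have hv := claim _ h11
    have heLe : ev ⬝ᵥ L0.mulVec ev = 1 := by
      rcases hu with h | h
      · rwa [h] at h00
      · rw [h] at h00
        simpa [Matrix.mulVec_neg, dotProduct_neg, neg_dotProduct, neg_neg]
          using h00
    rcases hu with h | h <;> rcases hv with h' | h' <;> rw [h, h'] at h01 <;>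
      simp [Matrix.mulVec_neg, dotProduct_neg, neg_dotProduct, heLe] at h01
  -- transfer to Fin n
  let eqv : (Fin 2 × J) ≃ Fin (Fintype.card (Fin 2 × J)) := Fintype.equivFin _
  refine ⟨Fintype.card (Fin 2 × J), L0.submatrix eqv.symm eqv.symm,
    isPosDefForm_reindex eqv hL0pd, ?_, ?_⟩
  · intro q hqT
    exact represents_trans (represents_reindex_fwd eqv L0) (hL0rep q hqT)
  · intro hrep
    exact hnot (represents_trans (represents_reindex_bwd eqv L0) hrep)
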